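/- For all characteristics ε, ε' ∈ (ℤ/2ℤ)^g with ε·ε' = 0, the substitution map sending p_T ↦ p̃_{T,χ} := P_T(…, v_{σ0}, …) − P_T(…, v_{σ1}, …) sends the quartic Q[ε,ε']² (written as a polynomial in the P_T) to Q[(ε,0),(ε',0)](v) · Q[(ε,0),(ε',1)](v); that is, writing Q[ε,ε'](x)² = ∑_T c_T P_T(x) for suitable constants c_T, one has ∑_T c_T p̃_{T,χ}(v) = Q[(ε,0),(ε',0)](v) · Q[(ε,0),(ε',1)](v) in ℂ[v]. -/

import Mathlib

open MvPolynomial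

/-- The group `(ℤ/2ℤ)^g`. -/
abbrev Vg (g : ℕ) : Type := Fin g → ZMod 2

instance (g : ℕ) : Finite (AddSubgroup (Vg g)) :=
  Finite.of_injective (fun T => (T : Set (Vg g))) SetLike.coe_injective

/-- The subgroups of `(ℤ/2ℤ)^g` of order at most four; these index the variables `p_T`. -/
abbrev SmallSubgroup (g : ℕ) : Type := {T : AddSubgroup (Vg g) // Nat.card T ≤ 4}

noncomputable instance (g : ℕ) : Fintype (SmallSubgroup g) := Fintype.ofFinite _

/-- For a subgroup `T = {0, α, β, α+β}` of order at most `4`, the Heisenberg-invariant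
quartic `P_T := ∑_ρ x_ρ x_{ρ+α} x_{ρ+β} x_{ρ+α+β}`, written intrinsically as
`∑_ρ (∏_{t ∈ T} x_{ρ+t})^{4/|T|}`. -/
noncomputable def PT {g : ℕ} (T : AddSubgroup (Vg g)) : MvPolynomial (Vg g) ℂ :=
  letI := Classical.decPred (fun t : Vg g => t ∈ T)
  ∑ ρ : Vg g,
    (∏ t ∈ Finset.univ.filter (fun t : Vg g => t ∈ T), X (ρ + t)) ^ (4 / Nat.card T)

/-- `p̃_{T,χ}(v) := P_T(…, v_{σ0}, …) − P_T(…, v_{σ1}, …)`, a quartic in the `2^{g+1}`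
variables `v_τ`, `τ ∈ (ℤ/2ℤ)^{g+1}`. -/
noncomputable def ptilde {g : ℕ} (T : AddSubgroup (Vg g)) : MvPolynomial (Vg (g + 1)) ℂ :=
  rename (fun σ : Vg g => Fin.snoc σ (0 : ZMod 2)) (PT T)
    - rename (fun σ : Vg g => Fin.snoc σ (1 : ZMod 2)) (PT T)

/-- The quadratic polynomial `Q[ε,ε'] := ∑_σ (−1)^{σ·ε'} x_σ x_{σ+ε}`. -/
noncomputable def Qe {n : ℕ} (ε ε' : Vg n) : MvPolynomial (Vg n) ℂ :=
  ∑ σ : Vg n, ((-1 : ℂ) ^ (∑ i, σ i * ε' i : ZMod 2).val) • (X σ * X (σ + ε))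

lemma snoc_add {g : ℕ} (a b : Vg g) (x y : ZMod 2) :
    (Fin.snoc a x : Vg (g+1)) + Fin.snoc b y = Fin.snoc (a + b) (x + y) := by
  funext i
  induction i using Fin.lastCases with
  | last => simp
  | cast i => simp

lemma m1pow (a b : ZMod 2) : ((-1 : ℂ)) ^ ((a + b).val) = (-1) ^ a.val * (-1) ^ b.val := by
  rcases (show ∀ x : ZMod 2, x = 0 ∨ x = 1 by decide) a with rfl | rfl <;>
  rcases (show ∀ x : ZMod 2, x = 0 ∨ x = 1 by decide) b with rfl | rfl <;>
  simp [ZMod.val_one, show ((1:ZMod 2)+1) = 0 by decide]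

lemma sum_zmod2 {M : Type*} [AddCommMonoid M] (f : ZMod 2 → M) :
    ∑ b : ZMod 2, f b = f 0 + f 1 := by
  rw [show (Finset.univ : Finset (ZMod 2)) = {0, 1} from by decide]
  simp

lemma split_sum {M : Type*} [AddCommMonoid M] {g : ℕ} (f : Vg (g+1) → M) :
    ∑ τ : Vg (g+1), f τ = (∑ σ : Vg g, f (Fin.snoc σ 0)) + ∑ σ : Vg g, f (Fin.snoc σ 1) := by
  rw [← Equiv.sum_comp (Fin.snocEquiv (fun _ => ZMod 2)) f, Fintype.sum_prod_type,
    sum_zmod2 (fun b => ∑ σ : Vg g, f (Fin.snocEquiv (fun _ => ZMod 2) (b, σ)))]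
  rfl

lemma Qe_snoc {g : ℕ} (ε ε' : Vg g) (c : ZMod 2) :
    Qe (Fin.snoc ε (0 : ZMod 2)) (Fin.snoc ε' c) =
      rename (fun σ : Vg g => Fin.snoc σ (0 : ZMod 2)) (Qe ε ε')
        + ((-1 : ℂ) ^ c.val) • rename (fun σ : Vg g => Fin.snoc σ (1 : ZMod 2)) (Qe ε ε') := by
  have key : ∀ (b : ZMod 2) (σ : Vg g),
      (∑ i, (Fin.snoc σ b : Vg (g+1)) i * (Fin.snoc ε' c : Vg (g+1)) i)
        = (∑ i, σ i * ε' i) + b * c := by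
    intro b σ
    rw [Fin.sum_univ_castSucc]
    simp
  rw [Qe, split_sum]
  rw [Qe, map_sum, map_sum, Finset.smul_sum]
  congr 1
  · apply Finset.sum_congr rfl
    intro σ _
    rw [key, snoc_add, m1pow]
    simp
  · apply Finset.sum_congr rfl
    intro σ _
    rw [key, snoc_add, m1pow]
    simp [smul_smul, mul_comm]

/-- If `Q[ε,ε']² = ∑_T c_T P_T` (with `ε·ε' = 0`), then the substitution `p_T ↦ p̃_{T,χ}`
sends it to `Q[(ε,0),(ε',0)](v) · Q[(ε,0),(ε',1)](v)`. -/
theorem ptilde_of_Qe_sq (g : ℕ) (ε ε' : Vg g)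
    (h0 : (∑ i, ε i * ε' i : ZMod 2) = 0) (c : SmallSubgroup g → ℂ)
    (hc : (Qe ε ε') ^ 2 = ∑ T : SmallSubgroup g, c T • PT T.1) :
    ∑ T : SmallSubgroup g, c T • ptilde T.1
      = Qe (Fin.snoc ε (0 : ZMod 2)) (Fin.snoc ε' (0 : ZMod 2))
        * Qe (Fin.snoc ε (0 : ZMod 2)) (Fin.snoc ε' (1 : ZMod 2)) := by
  have h1 : ∑ T : SmallSubgroup g, c T • ptilde T.1
      = rename (fun σ : Vg g => Fin.snoc σ (0 : ZMod 2)) ((Qe ε ε') ^ 2)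
        - rename (fun σ : Vg g => Fin.snoc σ (1 : ZMod 2)) ((Qe ε ε') ^ 2) := by
    rw [hc]
    simp only [ptilde, smul_sub, Finset.sum_sub_distrib, map_sum, map_smul]
  rw [h1, Qe_snoc ε ε' 0, Qe_snoc ε ε' 1]
  rw [show ((0 : ZMod 2)).val = 0 from rfl, show ((1 : ZMod 2)).val = 1 from rfl]
  simp only [pow_zero, pow_one, one_smul, neg_one_smul, map_pow]
  ring
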